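/- Let σ be a tgd applicable to CQ query Q via key-based atoms: every atom p_i(Ȳ_i, Z̄_i) added by the chase step has Ȳ_i a superkey of P_i, and P_i is set-valued on all databases satisfying Σ. Then the chase step Q ⇒^σ Q' is sound under bag semantics: for every bag-valued database D ⊨ Σ, Q(D,B) = Q'(D,B) as multisets. -/

import Mathlib

/-- A relational schema: a type of relation symbols with arities. -/
structure Schema where
  Rel : Type
  ar : Rel → ℕ

/-- A relational atom over schema `S`; variables are natural numbers. -/
structure Atom (S : Schema) where
  rel : S.Rel
  args : Fin (S.ar rel) → ℕ

/-- A conjunctive query: a head (list of variables) and a body (list of atoms). -/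
structure CQ (S : Schema) where
  hd : List ℕ
  body : List (Atom S)

variable {S : Schema} {Dom : Type}

def Atom.rename (f : ℕ → ℕ) (a : Atom S) : Atom S := ⟨a.rel, f ∘ a.args⟩

def CQ.rename (f : ℕ → ℕ) (Q : CQ S) : CQ S := ⟨Q.hd.map f, Q.body.map (Atom.rename f)⟩

/-- The variables of a query. -/
def CQ.vars (Q : CQ S) : Set ℕ := {x | x ∈ Q.hd ∨ ∃ a ∈ Q.body, ∃ i, a.args i = x}

/-- A bag-valued database: a finite multiset of tuples for each relation symbol. -/
abbrev DB (S : Schema) (Dom : Type) := (r : S.Rel) → Multiset (Fin (S.ar r) → Dom)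

/-- A set-valued database: every relation is a set. -/
def IsSetDB (D : DB S Dom) : Prop := ∀ r, (D r).Nodup

/-- An assignment satisfies a list of atoms. -/
def Sat (D : DB S Dom) (body : List (Atom S)) (γ : ℕ → Dom) : Prop :=
  ∀ a ∈ body, (γ ∘ a.args) ∈ D a.rel

/-- Bag-semantics weight of an assignment: product of multiplicities of matched tuples. -/
noncomputable def weight (D : DB S Dom) (Q : CQ S) (γ : ℕ → Dom) : ℕ :=
  (Q.body.map fun (a : Atom S) =>
    letI : DecidableEq (Fin (S.ar a.rel) → Dom) := Classical.decEq _
    (D a.rel).count (γ ∘ a.args)).prod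

/-- Canonical assignments: everything outside the query's variables is a default value. -/
def Canon [Inhabited Dom] (Q : CQ S) (γ : ℕ → Dom) : Prop := ∀ x, x ∉ Q.vars → γ x = default

/-- Bag semantics: multiplicity of the tuple `t` in `Q(D, B)`. -/
noncomputable def bagMult [Inhabited Dom] (D : DB S Dom) (Q : CQ S) (t : List Dom) : ℕ :=
  ∑ᶠ γ ∈ {γ : ℕ → Dom | Canon Q γ ∧ Q.hd.map γ = t}, weight D Q γ

/-- Bag-set semantics: multiplicity of `t` in `Q(D, BS)`: one per satisfying assignment. -/
noncomputable def bsMult [Inhabited Dom] (D : DB S Dom) (Q : CQ S) (t : List Dom) : ℕ :=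
  Nat.card {γ : ℕ → Dom // Canon Q γ ∧ Sat D Q.body γ ∧ Q.hd.map γ = t}

/-- Set semantics: the set of tuples returned by `Q` on `D`. -/
def setAns (D : DB S Dom) (Q : CQ S) : Set (List Dom) :=
  {t | ∃ γ : ℕ → Dom, Sat D Q.body γ ∧ Q.hd.map γ = t}

/-- Query isomorphism: a bijective variable renaming preserving head and body (as multiset). -/
def CQIso (Q1 Q2 : CQ S) : Prop :=
  ∃ e : ℕ ≃ ℕ, Q1.hd.map ⇑e = Q2.hd ∧
    Multiset.map (Atom.rename ⇑e) (Q1.body : Multiset (Atom S)) = (Q2.body : Multiset (Atom S))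

/-- A tuple-generating dependency (tgd) `φ → ∃ Z̄ ψ`: left-hand side atoms, right-hand
side atoms, and a finite set of existentially quantified variables. -/
structure TGD (S : Schema) where
  lhs : List (Atom S)
  rhs : List (Atom S)
  exVars : Finset ℕ

/-- An equality-generating dependency (egd) `φ → eq1 = eq2`. -/
structure EGD (S : Schema) where
  lhs : List (Atom S)
  eq1 : ℕ
  eq2 : ℕ

/-- An embedded dependency: a tgd or an egd. -/
inductive Dep (S : Schema) where
  | tgd : TGD S → Dep S
  | egd : EGD S → Dep S

/-- Well-formedness of a tgd: existential variables do not occur on the left-hand side,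
and every non-existential variable of the right-hand side occurs on the left-hand side. -/
def TGD.wf (σ : TGD S) : Prop :=
  (∀ a ∈ σ.lhs, ∀ i, a.args i ∉ σ.exVars) ∧
  (∀ a ∈ σ.rhs, ∀ i, a.args i ∉ σ.exVars → ∃ b ∈ σ.lhs, ∃ j, b.args j = a.args i)

/-- A database satisfies a tgd. -/
def TGDSat (D : DB S Dom) (σ : TGD S) : Prop :=
  ∀ γ : ℕ → Dom, (∀ a ∈ σ.lhs, (γ ∘ a.args) ∈ D a.rel) →
    ∃ γ' : ℕ → Dom, (∀ x, x ∉ σ.exVars → γ' x = γ x) ∧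
      ∀ a ∈ σ.rhs, (γ' ∘ a.args) ∈ D a.rel

/-- A database satisfies an egd. -/
def EGDSat (D : DB S Dom) (e : EGD S) : Prop :=
  ∀ γ : ℕ → Dom, (∀ a ∈ e.lhs, (γ ∘ a.args) ∈ D a.rel) → γ e.eq1 = γ e.eq2

/-- A database satisfies an embedded dependency. -/
def DSat (D : DB S Dom) : Dep S → Prop
  | .tgd σ => TGDSat D σ
  | .egd e => EGDSat D e

/-- A database satisfies a (finite) set of embedded dependencies. -/
def DBSat (D : DB S Dom) (Δ : List (Dep S)) : Prop := ∀ d ∈ Δ, DSat D d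

/-- Chase with tgd `σ` is applicable to `Q` via `h`: `h` maps the left-hand side into the
body of `Q` and cannot be extended to a homomorphism of the whole dependency. -/
def TgdApplicable (σ : TGD S) (Q : CQ S) (h : ℕ → ℕ) : Prop :=
  (∀ a ∈ σ.lhs, a.rename h ∈ Q.body) ∧
  ¬ ∃ h' : ℕ → ℕ, (∀ x, x ∉ σ.exVars → h' x = h x) ∧ ∀ a ∈ σ.rhs, a.rename h' ∈ Q.body

/-- `h'` extends `h` by mapping the existential variables injectively to fresh variables. -/
def FreshExt (σ : TGD S) (Q : CQ S) (h h' : ℕ → ℕ) : Prop :=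
  (∀ x, x ∉ σ.exVars → h' x = h x) ∧ Set.InjOn h' ↑σ.exVars ∧
  ∀ z ∈ σ.exVars, h' z ∉ Q.vars

/-- The result of a tgd chase step: conjoin the instantiated right-hand side. -/
def TgdResult (σ : TGD S) (Q : CQ S) (h' : ℕ → ℕ) : CQ S :=
  ⟨Q.hd, Q.body ++ σ.rhs.map (Atom.rename h')⟩

/-- A chase step with a tgd. -/
def TgdStep (σ : TGD S) (Q Q' : CQ S) : Prop :=
  ∃ h h' : ℕ → ℕ, TgdApplicable σ Q h ∧ FreshExt σ Q h h' ∧ Q' = TgdResult σ Q h'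

/-- A chase step with an egd: identify the two variables it equates. -/
def EgdStep (e : EGD S) (Q Q' : CQ S) : Prop :=
  ∃ h : ℕ → ℕ, (∀ a ∈ e.lhs, a.rename h ∈ Q.body) ∧ h e.eq1 ≠ h e.eq2 ∧
    (Q' = Q.rename (fun x => if x = h e.eq1 then h e.eq2 else x) ∨
     Q' = Q.rename (fun x => if x = h e.eq2 then h e.eq1 else x))

/-- A chase step with an embedded dependency. -/
def DepStep : Dep S → CQ S → CQ S → Prop
  | .tgd σ => TgdStep σ
  | .egd e => EgdStep e

/-- A (set-semantics) chase step using some dependency from `Δ`. -/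
def SetChaseStep (Δ : List (Dep S)) (Q Q' : CQ S) : Prop := ∃ d ∈ Δ, DepStep d Q Q'

/-- A query is a terminal result of set-semantics chase: no chase step applies. -/
def SetTerminal (Δ : List (Dep S)) (Q : CQ S) : Prop := ¬ ∃ Q', SetChaseStep Δ Q Q'

/-- An atom uses variable `v`. -/
def Atom.uses (a : Atom S) (v : ℕ) : Prop := ∃ i, a.args i = v

/-- Variable `v` occurs in the body of `Q`. -/
def Occurs (v : ℕ) (Q : CQ S) : Prop := ∃ a ∈ Q.body, a.uses v

/-- All variables of a tgd. -/
def TGD.varSet (σ : TGD S) : Set ℕ :=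
  {x | (∃ a ∈ σ.lhs, a.uses x) ∨ (∃ a ∈ σ.rhs, a.uses x) ∨ x ∈ σ.exVars}

/-- A regularized tgd: its right-hand side admits no nonshared partition into two nonempty
parts (i.e., parts sharing no existential variable). -/
def Regularized (σ : TGD S) : Prop :=
  ¬ ∃ l1 l2 : List (Atom S), l1 ≠ [] ∧ l2 ≠ [] ∧
      ((l1 ++ l2 : List (Atom S)) : Multiset (Atom S)) = (σ.rhs : Multiset (Atom S)) ∧
      ∀ v ∈ σ.exVars, ¬ ((∃ a ∈ l1, a.uses v) ∧ (∃ a ∈ l2, a.uses v))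

/-- A pair of fresh extensions of `h` with pairwise distinct fresh images (two disjoint
copies of fresh existential variables). -/
def FreshPair (σ : TGD S) (Q : CQ S) (h h1 h2 : ℕ → ℕ) : Prop :=
  FreshExt σ Q h h1 ∧ FreshExt σ Q h h2 ∧
  ∀ z ∈ σ.exVars, ∀ z' ∈ σ.exVars, h1 z ≠ h2 z'

/-- The associated test query `Q^{σ,h,θ}`: the body of `Q` conjoined with two copies of the
right-hand side of `σ`, instantiated with two disjoint families of fresh variables. -/
def testQuery (σ : TGD S) (Q : CQ S) (h1 h2 : ℕ → ℕ) : CQ S :=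
  ⟨Q.hd, Q.body ++ σ.rhs.map (Atom.rename h1) ++ σ.rhs.map (Atom.rename h2)⟩

/-- `σ` is assignment-fixing w.r.t. `Q` and `h`: in every terminal set-chase result of the
associated test query, at most one of the two fresh copies of each existential variable
still occurs. -/
def AssignmentFixing (Δ : List (Dep S)) (σ : TGD S) (Q : CQ S) (h : ℕ → ℕ) : Prop :=
  ∀ h1 h2 : ℕ → ℕ, FreshPair σ Q h h1 h2 →
    ∀ R : CQ S, Relation.ReflTransGen (SetChaseStep Δ) (testQuery σ Q h1 h2) R →
      SetTerminal Δ R → ∀ z ∈ σ.exVars, ¬ (Occurs (h1 z) R ∧ Occurs (h2 z) R)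

/-- A set `K` of attribute positions of relation `r` is a superkey of `r` with respect to
the dependencies `Δ`: on every database satisfying `Δ`, two tuples of `r` agreeing on the
positions in  are equal. -/
def Superkey (Dom : Type) (Δ : List (Dep S)) (r : S.Rel) (K : Set (Fin (S.ar r))) : Prop :=
  ∀ D : DB S Dom, DBSat D Δ →
    ∀ t1 ∈ D r, ∀ t2 ∈ D r, (∀ i ∈ K, t1 i = t2 i) → t1 = t2

section AuxForProof
variable {S : Schema} {Dom : Type}

lemma aux_mem_vars_of_hd {Q : CQ S} {x : ℕ} (hx : x ∈ Q.hd) : x ∈ Q.vars := Or.inl hx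

lemma aux_mem_vars_of_body {Q : CQ S} {a : Atom S} (ha : a ∈ Q.body) (i : Fin (S.ar a.rel)) :
    a.args i ∈ Q.vars := Or.inr ⟨a, ha, i, rfl⟩

lemma aux_sat_of_weight_ne_zero {D : DB S Dom} {Q : CQ S} {γ : ℕ → Dom}
    (hw : weight D Q γ ≠ 0) : Sat D Q.body γ := by
  classical
  intro a ha
  by_contra hmem
  apply hw
  unfold weight
  apply List.prod_eq_zero
  simp only [List.mem_map]
  refine ⟨a, ha, ?_⟩
  simpa [Multiset.count_eq_zero] using hmem

lemma aux_weight_congr {D : DB S Dom} {Q : CQ S} {γ1 γ2 : ℕ → Dom}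
    (h : ∀ a ∈ Q.body, ∀ i, γ1 (a.args i) = γ2 (a.args i)) :
    weight D Q γ1 = weight D Q γ2 := by
  unfold weight
  congr 1
  apply List.map_congr_left
  intro a ha
  have : (γ1 ∘ a.args) = (γ2 ∘ a.args) := funext fun i => h a ha i
  simp only [this]

end AuxForProof

/-- A key-based tgd chase step is sound under bag semantics: if for every
atom of the right-hand side of σ the positions holding universal (non-existential)
variables form a superkey of its relation, and that relation is set-valued on all
databases satisfying Δ, then the bag answers of Q and of the chase result agree on every
bag-valued database satisfying Δ. -/
theorem key_based_chase_step_sound_bag {S : Schema} (Dom : Type) [Inhabited Dom]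
    (Δ : List (Dep S)) (σ : TGD S) (hσ : Dep.tgd σ ∈ Δ) (hwf : σ.wf)
    (Q : CQ S) (h h' : ℕ → ℕ)
    (happ : TgdApplicable σ Q h) (hfr : FreshExt σ Q h h')
    (hkey : ∀ a ∈ σ.rhs, Superkey Dom Δ a.rel {i | a.args i ∉ σ.exVars})
    (hset : ∀ a ∈ σ.rhs, ∀ D : DB S Dom, DBSat D Δ → (D a.rel).Nodup) :
    ∀ D : DB S Dom, DBSat D Δ →
      ∀ t : List Dom, bagMult D Q t = bagMult D (TgdResult σ Q h') t := by
  intro D hD t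
  classical
  obtain ⟨hfr1, hfr2, hfr3⟩ := hfr
  have hlhsQ : ∀ a ∈ σ.lhs, a.rename h ∈ Q.body := happ.1
  set Q' : CQ S := TgdResult σ Q h' with hQ'def
  -- universal rhs variables map into Q.vars
  have hrhsvar : ∀ a ∈ σ.rhs, ∀ i, a.args i ∉ σ.exVars → h (a.args i) ∈ Q.vars := by
    intro a ha i hi
    obtain ⟨b, hb, j, hj⟩ := hwf.2 a ha i hi
    rw [← hj]
    exact Or.inr ⟨b.rename h, hlhsQ b hb, j, rfl⟩
  have hsub : Q.vars ⊆ Q'.vars := by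
    rintro x (hx | ⟨a, ha, i, hi⟩)
    · exact Or.inl hx
    · exact Or.inr ⟨a, List.mem_append_left _ ha, i, hi⟩
  have hQ'vars : ∀ x ∈ Q'.vars,
      x ∈ Q.vars ∨ ∃ z, z ∈ σ.exVars ∧ (∃ a ∈ σ.rhs, a.uses z) ∧ h' z = x := by
    rintro x (hx | ⟨a, ha, i, hi⟩)
    · exact Or.inl (Or.inl hx)
    · rcases List.mem_append.mp ha with ha' | ha'
      · exact Or.inl (Or.inr ⟨a, ha', i, hi⟩)
      · obtain ⟨b, hb, rfl⟩ := List.mem_map.mp ha'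
        by_cases hz : b.args i ∈ σ.exVars
        · exact Or.inr ⟨b.args i, hz, ⟨b, hb, i, rfl⟩, hi⟩
        · left
          rw [← hi]
          show h' (b.args i) ∈ Q.vars
          rw [hfr1 _ hz]
          exact hrhsvar b hb i hz
  have hfreshQ' : ∀ z ∈ σ.exVars, (∃ a ∈ σ.rhs, a.uses z) → h' z ∈ Q'.vars := by
    rintro z hz ⟨a, ha, i, hi⟩
    refine Or.inr ⟨a.rename h', List.mem_append_right _ (List.mem_map_of_mem ha), i, ?_⟩
    show h' (a.args i) = h' z
    rw [hi]
  -- uniqueness of extensions via superkeys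
  have huniq : ∀ δ1 δ2 : ℕ → Dom,
      (∀ a ∈ σ.rhs, ∀ j, a.args j ∉ σ.exVars → δ1 (a.args j) = δ2 (a.args j)) →
      (∀ a ∈ σ.rhs, (δ1 ∘ a.args) ∈ D a.rel) →
      (∀ a ∈ σ.rhs, (δ2 ∘ a.args) ∈ D a.rel) →
      ∀ a ∈ σ.rhs, ∀ i, δ1 (a.args i) = δ2 (a.args i) := by
    intro δ1 δ2 hagree h1s h2s a ha i
    have heq : (δ1 ∘ a.args) = (δ2 ∘ a.args) := by
      refine hkey a ha D hD _ (h1s a ha) _ (h2s a ha) ?_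
      intro j hj
      exact hagree a ha j hj
    exact congrFun heq i
  set Ψ : (ℕ → Dom) → (ℕ → Dom) := fun γ' x => if x ∈ Q.vars then γ' x else default with hΨdef
  set s0 : Set (ℕ → Dom) := {γ | Canon Q γ ∧ Sat D Q.body γ ∧ Q.hd.map γ = t} with hs0def
  set s0' : Set (ℕ → Dom) := {γ | Canon Q' γ ∧ Sat D Q'.body γ ∧ Q'.hd.map γ = t} with hs0'def
  have hA : bagMult D Q t = ∑ᶠ γ ∈ s0, weight D Q γ := by
    unfold bagMult
    apply finsum_mem_inter_support_eq
    ext γ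
    simp only [Set.mem_inter_iff, Set.mem_setOf_eq, Function.mem_support, hs0def]
    constructor
    · rintro ⟨⟨hc, ht⟩, hw⟩
      exact ⟨⟨hc, aux_sat_of_weight_ne_zero hw, ht⟩, hw⟩
    · rintro ⟨⟨hc, _, ht⟩, hw⟩
      exact ⟨⟨hc, ht⟩, hw⟩
  have hA' : bagMult D Q' t = ∑ᶠ γ ∈ s0', weight D Q' γ := by
    unfold bagMult
    apply finsum_mem_inter_support_eq
    ext γ
    simp only [Set.mem_inter_iff, Set.mem_setOf_eq, Function.mem_support, hs0'def]
    constructor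
    · rintro ⟨⟨hc, ht⟩, hw⟩
      exact ⟨⟨hc, aux_sat_of_weight_ne_zero hw, ht⟩, hw⟩
    · rintro ⟨⟨hc, _, ht⟩, hw⟩
      exact ⟨⟨hc, ht⟩, hw⟩
  -- weights agree under Ψ
  have hw : ∀ γ' ∈ s0', weight D Q' γ' = weight D Q (Ψ γ') := by
    rintro γ' ⟨hc, hs, ht⟩
    have hsplit : weight D Q' γ' = weight D Q γ' *
        ((σ.rhs.map (Atom.rename h')).map fun (a : Atom S) =>
          letI : DecidableEq (Fin (S.ar a.rel) → Dom) := Classical.decEq _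
          (D a.rel).count (γ' ∘ a.args)).prod := by
      unfold weight
      show ((Q.body ++ σ.rhs.map (Atom.rename h')).map _).prod = _
      rw [List.map_append, List.prod_append]
    have hone : ((σ.rhs.map (Atom.rename h')).map fun (a : Atom S) =>
        letI : DecidableEq (Fin (S.ar a.rel) → Dom) := Classical.decEq _
        (D a.rel).count (γ' ∘ a.args)).prod = 1 := by
      apply List.prod_eq_one
      intro x hx
      simp only [List.mem_map] at hx
      obtain ⟨b, hb, rfl⟩ := hx
      obtain ⟨a, ha, rfl⟩ := hb
      have hmem : (γ' ∘ (a.rename h').args) ∈ D (a.rename h').rel :=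
        hs _ (List.mem_append_right _ (List.mem_map_of_mem ha))
      letI : DecidableEq (Fin (S.ar (Atom.rename h' a).rel) → Dom) := Classical.decEq _
      exact Multiset.count_eq_one_of_mem (hset a ha D hD) hmem
    rw [hsplit, hone, mul_one]
    apply aux_weight_congr
    intro a ha i
    have hv : a.args i ∈ Q.vars := aux_mem_vars_of_body ha i
    simp only [hΨdef]
    rw [if_pos hv]
  have hmaps : Set.MapsTo Ψ s0' s0 := by
    rintro γ' ⟨hc, hs, ht⟩
    refine ⟨?_, ?_, ?_⟩
    · intro x hx
      simp only [hΨdef]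
      rw [if_neg hx]
    · intro a ha
      have heq : (Ψ γ') ∘ a.args = γ' ∘ a.args := by
        funext i
        simp only [hΨdef, Function.comp]
        rw [if_pos (aux_mem_vars_of_body ha i)]
      rw [heq]
      exact hs a (List.mem_append_left _ ha)
    · rw [← ht]
      show Q.hd.map (Ψ γ') = Q.hd.map γ'
      apply List.map_congr_left
      intro x hx
      simp only [hΨdef]
      rw [if_pos (aux_mem_vars_of_hd hx)]
  have hinj : Set.InjOn Ψ s0' := by
    rintro γ1 ⟨hc1, hs1, ht1⟩ γ2 ⟨hc2, hs2, ht2⟩ heq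
    have heqQ : ∀ x ∈ Q.vars, γ1 x = γ2 x := by
      intro x hx
      have := congrFun heq x
      simpa only [hΨdef, if_pos hx] using this
    funext x
    by_cases hx' : x ∈ Q'.vars
    · rcases hQ'vars x hx' with hx | ⟨z, hz, ⟨a, ha, i, hi⟩, rfl⟩
      · exact heqQ x hx
      · have key := huniq (γ1 ∘ h') (γ2 ∘ h') ?_ ?_ ?_ a ha i
        · rw [← hi]; exact key
        · intro b hb j hj
          show γ1 (h' (b.args j)) = γ2 (h' (b.args j))
          rw [hfr1 _ hj]
          exact heqQ _ (hrhsvar b hb j hj)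
        · intro b hb
          exact hs1 (b.rename h') (List.mem_append_right _ (List.mem_map_of_mem hb))
        · intro b hb
          exact hs2 (b.rename h') (List.mem_append_right _ (List.mem_map_of_mem hb))
    · rw [hc1 x hx', hc2 x hx']
  have hsurj : Set.SurjOn Ψ s0' s0 := by
    rintro γ ⟨hc, hs, ht⟩
    have hlhs : ∀ a ∈ σ.lhs, ((γ ∘ h) ∘ a.args) ∈ D a.rel := by
      intro a ha
      exact hs (a.rename h) (hlhsQ a ha)
    obtain ⟨δ, hδ1, hδ2⟩ := (hD (Dep.tgd σ) hσ : TGDSat D σ) (γ ∘ h) hlhs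
    set γ' : ℕ → Dom := fun x =>
      if x ∈ Q.vars then γ x
      else if hx : ∃ z, z ∈ σ.exVars ∧ (∃ a ∈ σ.rhs, a.uses z) ∧ h' z = x then δ hx.choose
      else default with hγ'def
    have hev1 : ∀ x ∈ Q.vars, γ' x = γ x := by
      intro x hx
      simp only [hγ'def]
      rw [if_pos hx]
    have hev2 : ∀ z ∈ σ.exVars, (∃ a ∈ σ.rhs, a.uses z) → γ' (h' z) = δ z := by
      intro z hz hocc
      have hnq : h' z ∉ Q.vars := hfr3 z hz
      have hx : ∃ z', z' ∈ σ.exVars ∧ (∃ a ∈ σ.rhs, a.uses z') ∧ h' z' = h' z :=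
        ⟨z, hz, hocc, rfl⟩
      simp only [hγ'def]
      rw [if_neg hnq, dif_pos hx]
      obtain ⟨hz', _, heq'⟩ := hx.choose_spec
      exact congrArg δ (hfr2 (Finset.mem_coe.mpr hz') (Finset.mem_coe.mpr hz) heq')
    have hev3 : ∀ a ∈ σ.rhs, (γ' ∘ h') ∘ a.args = δ ∘ a.args := by
      intro a ha
      funext i
      show γ' (h' (a.args i)) = δ (a.args i)
      by_cases hz : a.args i ∈ σ.exVars
      · exact hev2 _ hz ⟨a, ha, i, rfl⟩
      · rw [hfr1 _ hz, hev1 _ (hrhsvar a ha i hz)]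
        exact (hδ1 _ hz).symm
    refine ⟨γ', ⟨?_, ?_, ?_⟩, ?_⟩
    · -- Canon Q' γ'
      intro x hx
      have hxQ : x ∉ Q.vars := fun hxq => hx (hsub hxq)
      have hxE : ¬ ∃ z, z ∈ σ.exVars ∧ (∃ a ∈ σ.rhs, a.uses z) ∧ h' z = x := by
        rintro ⟨z, hz, hocc, rfl⟩
        exact hx (hfreshQ' z hz hocc)
      simp only [hγ'def]
      rw [if_neg hxQ, dif_neg hxE]
    · -- Sat
      intro b hb
      rcases List.mem_append.mp hb with hb' | hb'
      · have heqc : (γ' ∘ b.args) = (γ ∘ b.args) := by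
          funext i
          exact hev1 _ (aux_mem_vars_of_body hb' i)
        rw [heqc]
        exact hs b hb'
      · obtain ⟨a, ha, rfl⟩ := List.mem_map.mp hb'
        have : (γ' ∘ (a.rename h').args) = δ ∘ a.args := hev3 a ha
        rw [this]
        exact hδ2 a ha
    · -- head
      show Q.hd.map γ' = t
      rw [← ht]
      apply List.map_congr_left
      intro x hx
      exact hev1 _ (aux_mem_vars_of_hd hx)
    · -- Ψ γ' = γ
      funext x
      by_cases hx : x ∈ Q.vars
      · simp only [hΨdef]
        rw [if_pos hx]
        exact hev1 x hx
      · simp only [hΨdef]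
        rw [if_neg hx]
        exact (hc x hx).symm
  rw [hA, hA']
  exact (finsum_mem_eq_of_bijOn Ψ ⟨hmaps, hinj, hsurj⟩ hw).symm
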